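/- Let n ≥ 1 and let U_{6n} = ⟨a, b : a^{2n} = b³ = 1, a^{-1} b a = b^{-1}⟩ be the group of order 6n with this presentation. Then the energy of the commuting graph is E(Γ_{U_{6n}}) = 10n − 8. -/

import Mathlib

open scoped Classical

/-- The commuting graph of a group `G`: its vertices are the non-central
elements of `G`, and two distinct vertices are adjacent iff they commute. -/
noncomputable def commGraph (G : Type*) [Group G] :
    SimpleGraph {g : G // g ∉ Subgroup.center G} where
  Adj x y := x ≠ y ∧ (x : G) * y = (y : G) * x
  symm := ⟨fun _ _ h => ⟨h.1.symm, h.2.symm⟩⟩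
  loopless := ⟨fun _ h => h.1 rfl⟩

lemma adjMatrix_isHermitian {V : Type*} [Fintype V] (Γ : SimpleGraph V) :
    (Γ.adjMatrix ℝ).IsHermitian := by
  ext i j
  simp [Matrix.conjTranspose_apply, SimpleGraph.adj_comm]

/-- The energy of a finite graph: the sum of the absolute values of the
eigenvalues of its adjacency matrix. -/
noncomputable def graphEnergy {V : Type*} [Fintype V] (Γ : SimpleGraph V) : ℝ :=
  ∑ i, |(adjMatrix_isHermitian Γ).eigenvalues i|


namespace U6nAux

open Matrix


lemma val_cast_self {m : ℕ} [NeZero m] (i : ZMod m) : ((i.val : ℕ) : ZMod m) = i := by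
  simp [ZMod.natCast_val, ZMod.cast_id]

lemma card_even (n : ℕ) (hn : 1 ≤ n) :
    haveI : NeZero (2 * n) := ⟨by omega⟩
    Fintype.card {i : ZMod (2 * n) // Even i.val} = n := by
  haveI : NeZero (2 * n) := ⟨by omega⟩
  have e : Fin n ≃ {i : ZMod (2 * n) // Even i.val} := {
    toFun := fun k => ⟨((2 * (k : ℕ) : ℕ) : ZMod (2 * n)), by
      rw [ZMod.val_natCast, Nat.mod_eq_of_lt (by omega)]
      exact ⟨k, by ring⟩⟩
    invFun := fun i => ⟨i.1.val / 2, by have := ZMod.val_lt i.1; omega⟩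
    left_inv := fun k => by
      ext
      show ((2 * (k : ℕ) : ℕ) : ZMod (2 * n)).val / 2 = k
      rw [ZMod.val_natCast, Nat.mod_eq_of_lt (by omega)]
      omega
    right_inv := fun i => by
      obtain ⟨c, hc⟩ := i.2
      apply Subtype.ext
      show ((2 * (i.1.val / 2) : ℕ) : ZMod (2 * n)) = i.1
      rw [show 2 * (i.1.val / 2) = i.1.val by omega]
      exact val_cast_self i.1 }
  rw [← Fintype.card_congr e, Fintype.card_fin]

lemma card_odd (n : ℕ) (hn : 1 ≤ n) :
    haveI : NeZero (2 * n) := ⟨by omega⟩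
    Fintype.card {i : ZMod (2 * n) // ¬ Even i.val} = n := by
  haveI : NeZero (2 * n) := ⟨by omega⟩
  have e : Fin n ≃ {i : ZMod (2 * n) // ¬ Even i.val} := {
    toFun := fun k => ⟨((2 * (k : ℕ) + 1 : ℕ) : ZMod (2 * n)), by
      rw [ZMod.val_natCast, Nat.mod_eq_of_lt (by omega)]
      rw [Nat.even_add_one]
      simp only [not_not]
      exact ⟨k, by ring⟩⟩
    invFun := fun i => ⟨i.1.val / 2, by have := ZMod.val_lt i.1; omega⟩
    left_inv := fun k => by
      ext
      show ((2 * (k : ℕ) + 1 : ℕ) : ZMod (2 * n)).val / 2 = k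
      rw [ZMod.val_natCast, Nat.mod_eq_of_lt (by omega)]
      omega
    right_inv := fun i => by
      have hodd : ¬ Even i.1.val := i.2
      apply Subtype.ext
      show ((2 * (i.1.val / 2) + 1 : ℕ) : ZMod (2 * n)) = i.1
      rw [show 2 * (i.1.val / 2) + 1 = i.1.val by
        rcases Nat.even_or_odd i.1.val with h | h
        · exact absurd h hodd
        · obtain ⟨c, hc⟩ := h; omega]
      exact val_cast_self i.1 }
  rw [← Fintype.card_congr e, Fintype.card_fin]

section Grp2
variable {G : Type*} [Group G] (n : ℕ) (hn : 1 ≤ n) (a b : G)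
  (ha : a ^ (2 * n) = 1) (hb : b ^ 3 = 1) (hrel : a⁻¹ * b * a = b⁻¹)

include hrel in
lemma conj_a (j : ℤ) : a⁻¹ * b ^ j * a = b ^ (-j) := by
  have : a⁻¹ * b ^ j * a = (a⁻¹ * b * a) ^ j := by
    calc a⁻¹ * b ^ j * a = a⁻¹ * b ^ j * a⁻¹⁻¹ := by rw [inv_inv]
      _ = (a⁻¹ * b * a⁻¹⁻¹) ^ j := conj_zpow.symm
      _ = (a⁻¹ * b * a) ^ j := by rw [inv_inv]
  rw [this, hrel, _root_.inv_zpow, ← _root_.zpow_neg]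

/-- sign of k -/
def eps (k : ℕ) : ℤ := if Even k then 1 else -1

include hrel in
lemma swap_pow (k : ℕ) (j : ℤ) : b ^ j * a ^ k = a ^ k * b ^ (eps k * j) := by
  induction k with
  | zero => simp [eps]
  | succ m ih =>
      have : b ^ j * a ^ (m + 1) = (b ^ j * a ^ m) * a := by rw [pow_succ]; group
      rw [this, ih]
      have h2 : b ^ (eps m * j) * a = a * b ^ (-(eps m * j)) := by
        have := conj_a a b hrel (eps m * j)
        calc b ^ (eps m * j) * a = a * (a⁻¹ * b ^ (eps m * j) * a) := by group
          _ = a * b ^ (-(eps m * j)) := by rw [this]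
      rw [mul_assoc, h2, ← mul_assoc, ← pow_succ]
      congr 1
      have : eps (m + 1) = - eps m := by
        simp only [eps, Nat.even_add_one]
        by_cases h : Even m <;> simp [h]
      rw [this]; ring

include hn ha in
lemma red_a (m : ℤ) : a ^ m = a ^ (((m : ZMod (2 * n)).val : ℤ)) := by
  haveI : NeZero (2 * n) := ⟨by omega⟩
  have hmod : ((m : ZMod (2 * n)).val : ℤ) = m % (2 * n) := by
    rw [ZMod.val_intCast]
    norm_cast
  rw [hmod]
  conv_lhs => rw [show m = m % (2 * n) + (2 * n) * (m / (2 * n)) from (Int.emod_add_mul_ediv m _).symm]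
  rw [_root_.zpow_add, _root_.zpow_mul]
  norm_num
  rw [show ((2 * n : ℤ)) = ((2 * n : ℕ) : ℤ) by push_cast; ring, zpow_natCast, ha]
  simp

include hb in
lemma red_b (m : ℤ) : b ^ m = b ^ (((m : ZMod 3).val : ℤ)) := by
  have hmod : ((m : ZMod 3).val : ℤ) = m % 3 := by
    rw [ZMod.val_intCast]
    norm_cast
  rw [hmod]
  conv_lhs => rw [show m = m % 3 + 3 * (m / 3) from (Int.emod_add_mul_ediv m _).symm]
  rw [_root_.zpow_add, _root_.zpow_mul]
  rw [show ((3 : ℤ)) = ((3 : ℕ) : ℤ) by norm_num, zpow_natCast, hb]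
  simp

include hn ha in
lemma red_a_nat (m : ℕ) : a ^ m = a ^ ((m : ZMod (2 * n)).val) := by
  haveI : NeZero (2 * n) := ⟨by omega⟩
  conv_lhs => rw [← Nat.mod_add_div m (2 * n)]
  rw [pow_add, pow_mul, ha, one_pow, mul_one, ZMod.val_natCast]

/-- the canonical form map -/
def ff : ZMod (2 * n) × ZMod 3 → G := fun p => a ^ p.1.val * b ^ p.2.val

include hn ha hb hrel in
lemma ff_mul (p q : ZMod (2 * n) × ZMod 3) :
    ff n a b p * ff n a b q
      = ff n a b (p.1 + q.1, (if Even q.1.val then p.2 else -p.2) + q.2) := by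
  haveI : NeZero (2 * n) := ⟨by omega⟩
  unfold ff
  have h1 : a ^ p.1.val * b ^ p.2.val * (a ^ q.1.val * b ^ q.2.val)
      = a ^ (p.1.val + q.1.val) * b ^ ((eps q.1.val * p.2.val + q.2.val : ℤ)) := by
    calc a ^ p.1.val * b ^ p.2.val * (a ^ q.1.val * b ^ q.2.val)
        = a ^ p.1.val * (b ^ (p.2.val : ℤ) * a ^ q.1.val) * b ^ q.2.val := by
          rw [zpow_natCast]; group
      _ = a ^ p.1.val * (a ^ q.1.val * b ^ (eps q.1.val * p.2.val)) * b ^ q.2.val := by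
          rw [swap_pow a b hrel]
      _ = a ^ (p.1.val + q.1.val) * b ^ ((eps q.1.val * p.2.val + q.2.val : ℤ)) := by
          rw [pow_add, _root_.zpow_add, zpow_natCast]; group
  rw [h1]
  have h2 : a ^ (p.1.val + q.1.val) = a ^ ((p.1 + q.1 : ZMod (2 * n)).val) := by
    rw [red_a_nat n hn a ha]
    congr 1
    push_cast
    simp [ZMod.natCast_val, ZMod.cast_id]
  have h3 : b ^ ((eps q.1.val * p.2.val + q.2.val : ℤ))
      = b ^ (((if Even q.1.val then p.2 else -p.2) + q.2 : ZMod 3).val) := by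
    rw [red_b b hb]
    have : ((eps q.1.val * p.2.val + q.2.val : ℤ) : ZMod 3)
        = (if Even q.1.val then p.2 else -p.2) + q.2 := by
      push_cast
      simp only [eps]
      split_ifs <;> simp [ZMod.natCast_val, ZMod.cast_id] <;> ring
    rw [this, zpow_natCast]
  rw [h2, h3]

include hn ha hb hrel in
lemma ff_surj [Fintype G] (hgen : Subgroup.closure ({a, b} : Set G) = ⊤) :
    Function.Surjective (ff n a b) := by
  haveI : NeZero (2 * n) := ⟨by omega⟩
  -- the range is closed under multiplication and contains 1, a, b
  have hmulmem : ∀ x y, x ∈ Set.range (ff n a b) → y ∈ Set.range (ff n a b)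
      → x * y ∈ Set.range (ff n a b) := by
    rintro x y ⟨p, rfl⟩ ⟨q, rfl⟩
    exact ⟨_, (ff_mul n hn a b ha hb hrel p q).symm⟩
  have h1 : (1 : G) ∈ Set.range (ff n a b) := ⟨(0, 0), by simp [ff]⟩
  have hpowmem : ∀ x ∈ Set.range (ff n a b), ∀ k : ℕ, x ^ k ∈ Set.range (ff n a b) := by
    intro x hx k
    induction k with
    | zero => simpa using h1
    | succ m ih => rw [pow_succ]; exact hmulmem _ _ ih hx
  have hinvmem : ∀ x ∈ Set.range (ff n a b), x⁻¹ ∈ Set.range (ff n a b) := by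
    intro x hx
    have hord : x ^ (orderOf x - 1) = x⁻¹ := by
      have hpos : 0 < orderOf x := orderOf_pos x
      have := pow_orderOf_eq_one x
      rw [eq_inv_iff_mul_eq_one, ← pow_succ, Nat.sub_add_cancel hpos, this]
    rw [← hord]
    exact hpowmem x hx _
  set S : Subgroup G := {
    carrier := Set.range (ff n a b)
    mul_mem' := fun hx hy => hmulmem _ _ hx hy
    one_mem' := h1
    inv_mem' := fun hx => hinvmem _ hx }
  have hsub : Subgroup.closure ({a, b} : Set G) ≤ S := by
    rw [Subgroup.closure_le]
    rintro x (rfl | rfl)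
    · exact ⟨(1, 0), by simp [ff, ZMod.val_one_eq_one_mod, Nat.mod_eq_of_lt (by omega : 1 < 2 * n)]⟩
    · exact ⟨(0, 1), by simp [ff, ZMod.val_one]⟩
  intro g
  have : g ∈ S := by rw [hgen] at hsub; exact hsub (Subgroup.mem_top g)
  exact this

include hn ha hb hrel in
lemma ff_bij [Fintype G] (hgen : Subgroup.closure ({a, b} : Set G) = ⊤)
    (hcard : Fintype.card G = 6 * n) : Function.Bijective (ff n a b) := by
  haveI : NeZero (2 * n) := ⟨by omega⟩
  rw [Fintype.bijective_iff_surjective_and_card]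
  refine ⟨ff_surj n hn a b ha hb hrel hgen, ?_⟩
  simp [hcard, ZMod.card]
  ring

include hn ha hb hrel in
lemma ff_comm_iff [Fintype G] (hgen : Subgroup.closure ({a, b} : Set G) = ⊤)
    (hcard : Fintype.card G = 6 * n) (p q : ZMod (2 * n) × ZMod 3) :
    ff n a b p * ff n a b q = ff n a b q * ff n a b p ↔
      ((if Even q.1.val then p.2 else -p.2) + q.2
        = (if Even p.1.val then q.2 else -q.2) + p.2) := by
  rw [ff_mul n hn a b ha hb hrel p q, ff_mul n hn a b ha hb hrel q p]
  constructor
  · intro h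
    have := (ff_bij n hn a b ha hb hrel hgen hcard).injective h
    exact (Prod.ext_iff.mp this).2
  · intro h
    exact congrArg (ff n a b) (Prod.ext (add_comm _ _) h)

include hn ha hb hrel in
lemma center_iff [Fintype G] (hgen : Subgroup.closure ({a, b} : Set G) = ⊤)
    (hcard : Fintype.card G = 6 * n) (p : ZMod (2 * n) × ZMod 3) :
    ff n a b p ∈ Subgroup.center G ↔ (p.2 = 0 ∧ Even p.1.val) := by
  haveI : NeZero (2 * n) := ⟨by omega⟩
  have hval1 : ((1 : ZMod (2 * n))).val = 1 := ZMod.val_one_eq_one_mod _ ▸ Nat.mod_eq_of_lt (by omega)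
  constructor
  · intro h
    have hcom := Subgroup.mem_center_iff.mp h
    have h1 : ff n a b p * ff n a b ((1 : ZMod (2*n)), (0 : ZMod 3))
        = ff n a b ((1 : ZMod (2*n)), (0 : ZMod 3)) * ff n a b p := (hcom _).symm
    have h2 : ff n a b p * ff n a b ((0 : ZMod (2*n)), (1 : ZMod 3))
        = ff n a b ((0 : ZMod (2*n)), (1 : ZMod 3)) * ff n a b p := (hcom _).symm
    rw [ff_comm_iff n hn a b ha hb hrel hgen hcard] at h1 h2
    simp only [hval1] at h1
    rw [if_neg (by decide)] at h1
    have hp2 : p.2 = 0 := by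
      rcases Classical.em (Even p.1.val) with he | he
      · rw [if_pos he] at h1
        simpa using (by decide : ∀ u : ZMod 3, -u + 0 = 0 + u → u = 0) p.2 h1
      · rw [if_neg he] at h1
        simpa using (by decide : ∀ u : ZMod 3, -u + 0 = -0 + u → u = 0) p.2 h1
    refine ⟨hp2, ?_⟩
    by_contra he
    simp only [ZMod.val_zero, if_neg he] at h2
    rw [if_pos (by decide : Even (0:ℕ))] at h2
    exact (by decide : ∀ u : ZMod 3, ¬ (u + 1 = -1 + u)) p.2 h2
  · rintro ⟨h2, heven⟩
    rw [Subgroup.mem_center_iff]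
    intro g
    obtain ⟨q, rfl⟩ := ff_surj n hn a b ha hb hrel hgen g
    rw [ff_comm_iff n hn a b ha hb hrel hgen hcard]
    rw [h2, if_pos heven]
    split_ifs <;> simp

/-- component map -/
def cc : ZMod (2 * n) × ZMod 3 → Option (ZMod 3) :=
  fun p => if Even p.1.val then none else some p.2

include hn ha hb hrel in
lemma adj_iff [Fintype G] (hgen : Subgroup.closure ({a, b} : Set G) = ⊤)
    (hcard : Fintype.card G = 6 * n) (p q : ZMod (2 * n) × ZMod 3)
    (hp : ¬(p.2 = 0 ∧ Even p.1.val)) (hq : ¬(q.2 = 0 ∧ Even q.1.val)) :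
    (ff n a b p * ff n a b q = ff n a b q * ff n a b p) ↔ cc n p = cc n q := by
  rw [ff_comm_iff n hn a b ha hb hrel hgen hcard]
  unfold cc
  rcases Classical.em (Even p.1.val) with hep | hep <;>
    rcases Classical.em (Even q.1.val) with heq | heq
  · simp only [if_pos hep, if_pos heq]
    simp [add_comm]
  · have hp2 : p.2 ≠ 0 := fun h => hp ⟨h, hep⟩
    simp only [if_pos hep, if_neg heq]
    constructor
    · intro h
      exact absurd h ((by decide : ∀ u v : ZMod 3, u ≠ 0 → ¬(-u + v = v + u)) p.2 q.2 hp2)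
    · intro h; exact absurd h (by simp)
  · have hq2 : q.2 ≠ 0 := fun h => hq ⟨h, heq⟩
    simp only [if_neg hep, if_pos heq]
    constructor
    · intro h
      exact absurd h ((by decide : ∀ u v : ZMod 3, u ≠ 0 → ¬(v + u = -u + v)) q.2 p.2 hq2)
    · intro h; exact absurd h (by simp)
  · simp only [if_neg hep, if_neg heq, Option.some_inj]
    exact (by decide : ∀ u v : ZMod 3, (-u + v = -v + u) ↔ u = v) p.2 q.2

end Grp2

section Mat
variable {V τ : Type*} [Fintype V] [DecidableEq V] [Fintype τ] [DecidableEq τ] (c : V → τ)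

lemma sum_ite_card (p : V → Prop) [DecidablePred p] (r : ℝ) :
    ∑ z, (if p z then r else 0) = (Fintype.card {z // p z}) * r := by
  rw [← Finset.sum_filter, Finset.sum_const, Fintype.card_subtype, nsmul_eq_mul]

/-- block indicator matrix -/
def Bmat : Matrix V V ℝ := Matrix.of fun x y => if c x = c y then 1 else 0

/-- fiber sizes -/
def Nfib (t : τ) : ℕ := Fintype.card {z : V // c z = t}

lemma Bmat_mul_Bmat :
    Bmat c * Bmat c = Matrix.of fun x y => if c x = c y then (Nfib c (c x) : ℝ) else 0 := by
  ext x y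
  simp only [mul_apply, Bmat, of_apply]
  rcases eq_or_ne (c x) (c y) with h | h
  · rw [if_pos h]
    have : ∀ z, (if c x = c z then (1:ℝ) else 0) * (if c z = c y then 1 else 0)
        = if c z = c x then 1 else 0 := by
      intro z
      rcases eq_or_ne (c z) (c x) with hz | hz
      · rw [if_pos hz.symm, if_pos (hz.trans h), if_pos hz, one_mul]
      · rw [if_neg (fun hh => hz hh.symm), if_neg hz, zero_mul]
    rw [Finset.sum_congr rfl fun z _ => this z, sum_ite_card]
    rw [Nfib, mul_one]
  · rw [if_neg h]
    apply Finset.sum_eq_zero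
    intro z _
    rcases eq_or_ne (c x) (c z) with hz | hz
    · rw [if_neg (fun hh => h (hz.trans hh)), mul_zero]
    · rw [if_neg hz, zero_mul]

lemma Bmat_cube (m : ℕ) (hfib : ∀ t, Nfib c t = m ∨ Nfib c t = 2 * m) :
    Bmat c * Bmat c * Bmat c
      = (3 * (m:ℝ)) • (Bmat c * Bmat c) - (2 * (m:ℝ) ^ 2) • Bmat c := by
  rw [mul_assoc, Bmat_mul_Bmat]
  ext x y
  simp only [mul_apply, Bmat, of_apply, Matrix.sub_apply, Matrix.smul_apply, smul_eq_mul, Bmat_mul_Bmat]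
  have key : ∀ z, (if c x = c z then (1:ℝ) else 0) * (if c z = c y then (Nfib c (c z) : ℝ) else 0)
      = if c z = c x then (if c x = c y then (Nfib c (c x) : ℝ) else 0) else 0 := by
    intro z
    rcases eq_or_ne (c z) (c x) with hz | hz
    · rw [if_pos hz.symm, hz, if_pos rfl, one_mul]
    · rw [if_neg (fun hh => hz hh.symm), if_neg hz, zero_mul]
  rw [Finset.sum_congr rfl fun z _ => key z, sum_ite_card]
  rw [show Fintype.card {z // c z = c x} = Nfib c (c x) from rfl]
  rcases eq_or_ne (c x) (c y) with h | h
  · simp only [if_pos h]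
    rcases hfib (c x) with hm | hm <;> rw [hm] <;> push_cast <;> ring
  · simp only [if_neg h]
    ring

lemma Bmat_trace : (Bmat c).trace = Fintype.card V := by
  simp [Matrix.trace, Matrix.diag, Bmat]

lemma Bmat_sq_trace : (Bmat c * Bmat c).trace = ∑ t, (Nfib c t : ℝ) ^ 2 := by
  rw [Bmat_mul_Bmat]
  simp only [Matrix.trace, Matrix.diag, of_apply, eq_self_iff_true, if_true]
  rw [← Fintype.sum_fiberwise c fun x => (Nfib c (c x) : ℝ)]
  congr 1
  ext t
  rw [Finset.sum_congr rfl (fun z _ => by rw [z.2] : ∀ z : {x : V // c x = t}, z ∈ Finset.univ →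
      ((Nfib c (c z.1) : ℝ)) = (Nfib c t : ℝ))]
  rw [Finset.sum_const, Finset.card_univ]
  rw [show Fintype.card {x : V // c x = t} = Nfib c t from rfl]
  rw [nsmul_eq_mul, pow_two]

lemma card_V_eq : Fintype.card V = ∑ t, Nfib c t := by
  calc Fintype.card V = Fintype.card (Σ t, {x : V // c x = t}) :=
        Fintype.card_congr (Equiv.sigmaFiberEquiv c).symm
    _ = ∑ t, Nfib c t := Fintype.card_sigma

end Mat

section Spec
variable {V : Type*} [Fintype V] [DecidableEq V]

lemma trace_eq_sum_eigen (A : Matrix V V ℝ) (hA : A.IsHermitian) :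
    A.trace = ∑ i, hA.eigenvalues i := by
  nth_rewrite 1 [hA.spectral_theorem]
  rw [Unitary.conjStarAlgAut_apply]
  rw [Matrix.trace_mul_cycle, Unitary.coe_star_mul_self, one_mul, trace_diagonal]
  simp

lemma trace_sq_eq_sum_eigen (A : Matrix V V ℝ) (hA : A.IsHermitian) :
    (A * A).trace = ∑ i, hA.eigenvalues i ^ 2 := by
  have key : ∀ (U D : Matrix V V ℝ), star U * U = 1 →
      ((U * D * star U) * (U * D * star U)).trace = (D * D).trace := by
    intro U D h
    rw [show U * D * star U * (U * D * star U) = U * D * (star U * U) * D * star U by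
      simp only [mul_assoc], h, mul_one, Matrix.trace_mul_cycle]
    simp only [← mul_assoc]
    rw [h, one_mul]
  rw [congrArg₂ (· * ·) hA.spectral_theorem hA.spectral_theorem, Unitary.conjStarAlgAut_apply,
    key _ _ (Unitary.coe_star_mul_self hA.eigenvectorUnitary)]
  simp [diagonal_mul_diagonal, trace_diagonal, pow_two]

lemma eigen_mem (A : Matrix V V ℝ) (hA : A.IsHermitian) (c : ℝ) (hc : 0 < c)
    (hB : (A + 1) * (A + 1) * (A + 1) = (3 * c) • ((A + 1) * (A + 1)) - (2 * c ^ 2) • (A + 1))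
    (i : V) :
    hA.eigenvalues i = -1 ∨ hA.eigenvalues i = c - 1 ∨ hA.eigenvalues i = 2 * c - 1 := by
  set μ := hA.eigenvalues i with hμ
  set v : V → ℝ := ⇑(hA.eigenvectorBasis i) with hv
  have hv0 : v ≠ 0 := by
    have := hA.eigenvectorBasis.orthonormal.ne_zero i
    simpa [hv] using fun h => this h
  have h1 : A *ᵥ v = μ • v := hA.mulVec_eigenvectorBasis i
  have hBv : (A + 1) *ᵥ v = (μ + 1) • v := by
    rw [Matrix.add_mulVec, Matrix.one_mulVec, h1, add_smul, one_smul]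
  have hB2 : ((A + 1) * (A + 1)) *ᵥ v = ((μ + 1) ^ 2) • v := by
    rw [← Matrix.mulVec_mulVec, hBv, Matrix.mulVec_smul, hBv, smul_smul, pow_two]
  have hB3 : ((A + 1) * (A + 1) * (A + 1)) *ᵥ v = ((μ + 1) ^ 3) • v := by
    rw [← Matrix.mulVec_mulVec, hBv, Matrix.mulVec_smul, hB2, smul_smul]
    congr 1
    ring
  have key : ((μ + 1) ^ 3 - 3 * c * (μ + 1) ^ 2 + 2 * c ^ 2 * (μ + 1)) • v = 0 := by
    have := congrArg (fun M => M *ᵥ v) hB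
    simp only [Matrix.sub_mulVec, Matrix.smul_mulVec, hB2, hBv, hB3] at this
    calc ((μ + 1) ^ 3 - 3 * c * (μ + 1) ^ 2 + 2 * c ^ 2 * (μ + 1)) • v
        = (μ + 1) ^ 3 • v - ((3 * c) • ((μ + 1) ^ 2 • v) - (2 * c ^ 2) • ((μ + 1) • v)) := by
          module
      _ = 0 := by rw [this]; abel
  have hz : (μ + 1) ^ 3 - 3 * c * (μ + 1) ^ 2 + 2 * c ^ 2 * (μ + 1) = 0 := by
    by_contra h
    exact hv0 ((smul_eq_zero.mp key).resolve_left h)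
  have hfact : (μ + 1) * ((μ + 1) - c) * ((μ + 1) - 2 * c) = 0 := by ring_nf; ring_nf at hz; linarith
  rcases mul_eq_zero.mp hfact with h | h
  · rcases mul_eq_zero.mp h with h | h
    · left; linarith
    · right; left; linarith
  · right; right; linarith

lemma energy_calc {ι : Type*} [Fintype ι] (c : ℝ) (hc : 1 ≤ c) (μ : ι → ℝ)
    (hcard : (Fintype.card ι : ℝ) = 5 * c)
    (h0 : ∑ i, μ i = 0) (h2 : ∑ i, μ i ^ 2 = 7 * c ^ 2 - 5 * c)
    (hmem : ∀ i, μ i = -1 ∨ μ i = c - 1 ∨ μ i = 2 * c - 1) :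
    ∑ i, |μ i| = 10 * c - 8 := by
  have hc0 : (c : ℝ) ≠ 0 := by linarith
  have hpt : ∀ i, |μ i| = μ i + (μ i - (c - 1)) * (μ i - (2 * c - 1)) / c ^ 2 := by
    intro i
    rcases hmem i with h | h | h <;> rw [h]
    · rw [abs_of_nonpos (by norm_num)]
      field_simp
      ring
    · rw [abs_of_nonneg (by linarith)]
      field_simp
      ring
    · rw [abs_of_nonneg (by linarith)]
      field_simp
      ring
  calc ∑ i, |μ i| = ∑ i, (μ i + (μ i - (c - 1)) * (μ i - (2 * c - 1)) / c ^ 2) := by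
        exact Finset.sum_congr rfl fun i _ => hpt i
    _ = ∑ i, μ i + ((∑ i, μ i ^ 2) - (3 * c - 2) * ∑ i, μ i
          + (Fintype.card ι : ℝ) * ((c - 1) * (2 * c - 1))) / c ^ 2 := by
        rw [Finset.sum_add_distrib]
        congr 1
        rw [← Finset.sum_div]
        congr 1
        rw [show ∀ f : ι → ℝ, ∑ i, f i =  ∑ i, f i from fun _ => rfl]
        rw [Finset.sum_congr rfl (fun (i : ι) _ => show (μ i - (c - 1)) * (μ i - (2 * c - 1))
            = μ i ^ 2 - (3 * c - 2) * μ i + (c - 1) * (2 * c - 1) by ring)]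
        rw [Finset.sum_add_distrib, Finset.sum_sub_distrib, ← Finset.mul_sum]
        simp only [Finset.sum_const, Finset.card_univ, nsmul_eq_mul]
    _ = 10 * c - 8 := by
        rw [h0, h2, hcard]
        field_simp
        ring

end Spec

end U6nAux

/-- The energy of the commuting graph of the group
`U_{6n} = ⟨a, b : a^(2n) = b³ = 1, a⁻¹ b a = b⁻¹⟩` of order `6n`. -/
theorem energy_commGraph_U6n
    (n : ℕ) (hn : 1 ≤ n)
    (G : Type*) [Group G] [Fintype G] (a b : G)
    (ha : a ^ (2 * n) = 1) (hb : b ^ 3 = 1) (hrel : a⁻¹ * b * a = b⁻¹)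
    (hgen : Subgroup.closure ({a, b} : Set G) = ⊤)
    (hcard : Fintype.card G = 6 * n) :
    graphEnergy (commGraph G) = 10 * (n : ℝ) - 8 := by
  classical
  haveI : NeZero (2 * n) := ⟨by omega⟩
  have hbij := U6nAux.ff_bij n hn a b ha hb hrel hgen hcard
  set e : (ZMod (2 * n) × ZMod 3) ≃ G := Equiv.ofBijective _ hbij with he
  have he_apply : ∀ p, e p = U6nAux.ff n a b p := fun p => rfl
  have hff : ∀ g : G, U6nAux.ff n a b (e.symm g) = g := fun g => e.apply_symm_apply g
  set cV : {g : G // g ∉ Subgroup.center G} → Option (ZMod 3) :=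
    fun x => U6nAux.cc n (e.symm x.1) with hcVdef
  have hnc : ∀ x : {g : G // g ∉ Subgroup.center G},
      ¬((e.symm x.1).2 = 0 ∧ Even (e.symm x.1).1.val) := by
    intro x hx
    exact x.2 (by
      rw [← hff x.1]
      exact (U6nAux.center_iff n hn a b ha hb hrel hgen hcard _).mpr hx)
  have hAdj : ∀ x y : {g : G // g ∉ Subgroup.center G},
      (commGraph G).Adj x y ↔ (x ≠ y ∧ cV x = cV y) := by
    intro x y
    constructor
    · rintro (⟨hne, hcomm⟩ : x ≠ y ∧ (x : G) * y = (y : G) * x)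
      refine ⟨hne, ?_⟩
      exact (U6nAux.adj_iff n hn a b ha hb hrel hgen hcard (e.symm x.1) (e.symm y.1)
        (hnc x) (hnc y)).mp (by rw [hff, hff]; exact hcomm)
    · rintro ⟨hne, hcc⟩
      refine (⟨hne, ?_⟩ : x ≠ y ∧ (x : G) * y = (y : G) * x)
      have := (U6nAux.adj_iff n hn a b ha hb hrel hgen hcard (e.symm x.1) (e.symm y.1)
        (hnc x) (hnc y)).mpr hcc
      rw [hff, hff] at this
      exact this
  set A : Matrix {g : G // g ∉ Subgroup.center G} {g : G // g ∉ Subgroup.center G} ℝ :=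
    (commGraph G).adjMatrix ℝ with hAdef
  have hB : A = U6nAux.Bmat cV - 1 := by
    ext x y
    by_cases hxy : x = y
    · subst hxy
      simp [hAdef, SimpleGraph.adjMatrix_apply, U6nAux.Bmat, Matrix.one_apply]
    · rw [Matrix.sub_apply, Matrix.one_apply_ne hxy, sub_zero, hAdef,
        SimpleGraph.adjMatrix_apply]
      by_cases h : cV x = cV y
      · rw [if_pos ((hAdj x y).mpr ⟨hxy, h⟩)]
        simp [U6nAux.Bmat, h]
      · rw [if_neg (fun hadj => h ((hAdj x y).mp hadj).2)]
        simp [U6nAux.Bmat, h]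
  -- fiber computations
  have hEq : ∀ t, U6nAux.Nfib cV t = Fintype.card {p : ZMod (2 * n) × ZMod 3 //
      ¬(p.2 = 0 ∧ Even p.1.val) ∧ U6nAux.cc n p = t} := by
    intro t
    apply Fintype.card_congr
    exact {
      toFun := fun z => ⟨e.symm z.1.1, ⟨hnc z.1, z.2⟩⟩
      invFun := fun p => ⟨⟨U6nAux.ff n a b p.1, fun hcen => p.2.1
          ((U6nAux.center_iff n hn a b ha hb hrel hgen hcard p.1).mp hcen)⟩, by
        show U6nAux.cc n (e.symm (U6nAux.ff n a b p.1)) = t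
        rw [← he_apply, e.symm_apply_apply]
        exact p.2.2⟩
      left_inv := fun z => by
        apply Subtype.ext; apply Subtype.ext; exact hff z.1.1
      right_inv := fun p => by
        apply Subtype.ext
        show e.symm (U6nAux.ff n a b p.1) = p.1
        rw [← he_apply, e.symm_apply_apply] }
  have hfib_none : U6nAux.Nfib cV none = 2 * n := by
    rw [hEq none]
    have hiff : ∀ p : ZMod (2 * n) × ZMod 3,
        (¬(p.2 = 0 ∧ Even p.1.val) ∧ U6nAux.cc n p = none) ↔
          (Even p.1.val ∧ p.2 ≠ 0) := by
      intro p
      unfold U6nAux.cc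
      by_cases hE : Even p.1.val <;> simp [hE] <;> tauto
    rw [Fintype.card_congr (Equiv.subtypeEquivRight hiff)]
    rw [Fintype.card_congr (Equiv.subtypeProdEquivProd
      (p := fun i : ZMod (2 * n) => Even i.val) (q := fun j : ZMod 3 => j ≠ 0))]
    rw [Fintype.card_prod, U6nAux.card_even n hn]
    rw [show Fintype.card {j : ZMod 3 // j ≠ 0} = 2 by decide]
    ring
  have hfib_some : ∀ jj : ZMod 3, U6nAux.Nfib cV (some jj) = n := by
    intro jj
    rw [hEq (some jj)]
    have hiff : ∀ p : ZMod (2 * n) × ZMod 3,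
        (¬(p.2 = 0 ∧ Even p.1.val) ∧ U6nAux.cc n p = some jj) ↔
          (¬ Even p.1.val ∧ p.2 = jj) := by
      intro p
      unfold U6nAux.cc
      by_cases hE : Even p.1.val <;> simp [hE] <;> tauto
    rw [Fintype.card_congr (Equiv.subtypeEquivRight hiff)]
    rw [Fintype.card_congr (Equiv.subtypeProdEquivProd
      (p := fun i : ZMod (2 * n) => ¬ Even i.val) (q := fun j : ZMod 3 => j = jj))]
    rw [Fintype.card_prod, U6nAux.card_odd n hn, Fintype.card_subtype_eq, mul_one]
  have hfib : ∀ t, U6nAux.Nfib cV t = n ∨ U6nAux.Nfib cV t = 2 * n := by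
    intro t
    cases t with
    | none => right; exact hfib_none
    | some jj => left; exact hfib_some jj
  have hsum_fib : ∀ f : Option (ZMod 3) → ℝ,
      ∑ t, f t = f none + ∑ jj : ZMod 3, f (some jj) := fun f => Fintype.sum_option f
  have hcardV : Fintype.card {g : G // g ∉ Subgroup.center G} = 5 * n := by
    rw [U6nAux.card_V_eq cV, Fintype.sum_option, hfib_none]
    rw [Finset.sum_congr rfl fun jj _ => hfib_some jj]
    simp [ZMod.card]
    ring
  -- traces
  have htrA : A.trace = 0 := by
    rw [hAdef]
    simp [Matrix.trace, Matrix.diag]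
  have htrB : (U6nAux.Bmat cV).trace = 5 * (n : ℝ) := by
    rw [U6nAux.Bmat_trace cV, hcardV]
    push_cast
    ring
  have htrB2 : (U6nAux.Bmat cV * U6nAux.Bmat cV).trace = 7 * (n : ℝ) ^ 2 := by
    rw [U6nAux.Bmat_sq_trace cV, hsum_fib, hfib_none]
    rw [Finset.sum_congr rfl fun jj _ => by rw [hfib_some jj]]
    simp [ZMod.card]
    push_cast
    ring
  have htrA2 : (A * A).trace = 7 * (n : ℝ) ^ 2 - 5 * n := by
    rw [hB]
    have hexp : (U6nAux.Bmat cV - 1) * (U6nAux.Bmat cV - 1)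
        = U6nAux.Bmat cV * U6nAux.Bmat cV - U6nAux.Bmat cV - U6nAux.Bmat cV + 1 := by
      noncomm_ring
    rw [hexp, Matrix.trace_add, Matrix.trace_sub, Matrix.trace_sub, htrB2, htrB,
      Matrix.trace_one, hcardV]
    push_cast
    ring
  have hApB : A + 1 = U6nAux.Bmat cV := by rw [hB]; noncomm_ring
  have hcube : (A + 1) * (A + 1) * (A + 1)
      = (3 * (n : ℝ)) • ((A + 1) * (A + 1)) - (2 * (n : ℝ) ^ 2) • (A + 1) := by
    rw [hApB]
    exact_mod_cast U6nAux.Bmat_cube cV n hfib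
  have hH : A.IsHermitian := adjMatrix_isHermitian (commGraph G)
  have hnpos : (0 : ℝ) < n := by exact_mod_cast hn
  have hmem := U6nAux.eigen_mem A hH (n : ℝ) hnpos hcube
  have h0 : ∑ i, hH.eigenvalues i = 0 := by
    rw [← U6nAux.trace_eq_sum_eigen A hH, htrA]
  have h2 : ∑ i, hH.eigenvalues i ^ 2 = 7 * (n : ℝ) ^ 2 - 5 * n := by
    rw [← U6nAux.trace_sq_eq_sum_eigen A hH, htrA2]
  have hcardV' : ((Fintype.card {g : G // g ∉ Subgroup.center G} : ℕ) : ℝ) = 5 * (n : ℝ) := by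
    rw [hcardV]; push_cast; ring
  have := U6nAux.energy_calc (n : ℝ) (by exact_mod_cast hn) hH.eigenvalues hcardV' h0 h2 hmem
  exact this
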